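/- arXiv:1908.08110 — 3 statements merged into one kernel-verified Lean document; each statement's English description precedes it below -/
import Mathlib

section
/- Let P = 1 + p be a paravector in Cl(3,3) (with p = Σ p^i e_i, e_i = (1/2)(e_i^+ + e_i^-)), and let n^± = Σ n^i e_i^± with Σ (n^i)² = 1. Set N = n^+ n^-. Then -N P Ñ = 1 + p_R, where Ñ = n^- n^+ is the reversion of N and p_R = Σ (p^i - 2(Σ_j n^j p^j) n^i) e_i is the reflection of p in the plane with unit normal n. -/
lemma mul_sums {A : Type*} [Ring A] [Algebra ℝ A] (a b : Fin 3 → ℝ) (f g : Fin 3 → A) :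
    (∑ i : Fin 3, a i • f i) * (∑ j : Fin 3, b j • g j)
      = ∑ i : Fin 3, ∑ j : Fin 3, (a i * b j) • (f i * g j) := by
  rw [Finset.sum_mul]
  refine Finset.sum_congr rfl fun i _ => ?_
  rw [smul_mul_assoc, Finset.mul_sum, Finset.smul_sum]
  exact Finset.sum_congr rfl fun j _ => by rw [mul_smul_comm, smul_smul]

lemma acomm_sum {A : Type*} [Ring A] [Algebra ℝ A] (a b : Fin 3 → ℝ) (f g : Fin 3 → A) :
    (∑ i : Fin 3, a i • f i) * (∑ j : Fin 3, b j • g j)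
      + (∑ j : Fin 3, b j • g j) * (∑ i : Fin 3, a i • f i)
      = ∑ i : Fin 3, ∑ j : Fin 3, (a i * b j) • (f i * g j + g j * f i) := by
  rw [mul_sums, mul_sums,
    Finset.sum_comm (s := Finset.univ) (t := Finset.univ)
      (f := fun i j => (b i * a j) • (g i * f j)),
    ← Finset.sum_add_distrib]
  refine Finset.sum_congr rfl fun i _ => ?_
  rw [← Finset.sum_add_distrib]
  exact Finset.sum_congr rfl fun j _ => by rw [smul_add, mul_comm (b j)]

lemma diag_sum {A : Type*} [Ring A] [Algebra ℝ A] (a b : Fin 3 → ℝ) (c : A) :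
    (∑ i : Fin 3, ∑ j : Fin 3, (a i * b j) • (if i = j then c else 0))
      = (∑ i : Fin 3, a i * b i) • c := by
  rw [Finset.sum_smul]
  refine Finset.sum_congr rfl fun i _ => ?_
  rw [Finset.sum_eq_single i] <;> simp +contextual [eq_comm]

lemma halve {A : Type*} [Ring A] [Algebra ℝ A] {x y : A} (h : x + x = y) :
    x = (1/2 : ℝ) • y := by
  rw [← h, smul_add, ← add_smul]; norm_num

/-- In Cl(3,3), with `N = n⁺n⁻` for a unit `n`, and `Ñ = n⁻n⁺` its
reversion, the paravector `P = 1 + p` satisfies `-N P Ñ = 1 + p_R`, where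
`p_R = Σ (pᶦ - 2 (Σⱼ nʲpʲ) nᶦ) eᵢ` is the reflection of `p` in the plane with
unit normal `n`. -/
theorem cl33_reflection {A : Type*} [Ring A] [Algebra ℝ A]
    (ep em : Fin 3 → A)
    (hpp : ∀ i j, ep i * ep j + ep j * ep i = if i = j then 2 else 0)
    (hmm : ∀ i j, em i * em j + em j * em i = if i = j then -2 else 0)
    (hpm : ∀ i j, ep i * em j + em j * ep i = 0)
    (nc pc : Fin 3 → ℝ) (hn : ∑ i : Fin 3, (nc i) ^ 2 = 1) :
    -((∑ i : Fin 3, nc i • ep i) * (∑ i : Fin 3, nc i • em i) *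
        (1 + ∑ i : Fin 3, pc i • ((1/2 : ℝ) • (ep i + em i))) *
        ((∑ i : Fin 3, nc i • em i) * (∑ i : Fin 3, nc i • ep i))) =
      1 + ∑ i : Fin 3,
        (pc i - 2 * (∑ j : Fin 3, nc j * pc j) * nc i) •
          ((1/2 : ℝ) • (ep i + em i)) := by
  classical
  set s := ∑ j : Fin 3, nc j * pc j with hs
  set Np := ∑ i : Fin 3, nc i • ep i with hNp
  set Nm := ∑ i : Fin 3, nc i • em i with hNm
  set Pp := ∑ i : Fin 3, pc i • ep i with hPp
  set Pm := ∑ i : Fin 3, pc i • em i with hPm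
  have hnn : ∑ i : Fin 3, nc i * nc i = 1 := by simpa [pow_two] using hn
  have half_two : ((1/2 : ℝ)) • (2 : A) = 1 := by
    rw [show (2 : A) = (1 : A) + 1 from one_add_one_eq_two.symm, smul_add, ← add_smul]
    norm_num
  have smul_two_one : ∀ c : ℝ, c • (2 : A) = (2 * c) • (1 : A) := fun c => by
    rw [show (2 : A) = (1 : A) + 1 from one_add_one_eq_two.symm, smul_add, ← add_smul,
      two_mul]
  have hNpNp : Np * Np = 1 := by
    have h := acomm_sum nc nc ep ep
    simp only [hpp] at h
    rw [diag_sum, hnn, one_smul] at h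
    rw [halve h, half_two]
  have hNmNm : Nm * Nm = -1 := by
    have h := acomm_sum nc nc em em
    simp only [hmm] at h
    rw [diag_sum, hnn, one_smul] at h
    rw [halve h, show ((-2 : A)) = -(2 : A) by norm_num, smul_neg, half_two]
  have hNpNm : Np * Nm = -(Nm * Np) := by
    have h := acomm_sum nc nc ep em
    simp only [hpm, smul_zero, Finset.sum_const_zero] at h
    exact eq_neg_of_add_eq_zero_left h
  have hNpPp : Np * Pp = (2 * s) • (1 : A) - Pp * Np := by
    have h := acomm_sum nc pc ep ep
    simp only [hpp] at h
    rw [diag_sum, ← hs, smul_two_one] at h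
    exact eq_sub_of_add_eq h
  have hNmPm : Nm * Pm = -((2 * s) • (1 : A)) - Pm * Nm := by
    have h := acomm_sum nc pc em em
    simp only [hmm] at h
    rw [diag_sum, ← hs, show ((-2 : A)) = -(2 : A) by norm_num, smul_neg,
      smul_two_one] at h
    rw [eq_sub_of_add_eq h, neg_sub_left]
  have hNpPm : Np * Pm = -(Pm * Np) := by
    have h := acomm_sum nc pc ep em
    simp only [hpm, smul_zero, Finset.sum_const_zero] at h
    exact eq_neg_of_add_eq_zero_left h
  have hNmPp : Nm * Pp = -(Pp * Nm) := by
    have h0 : ∀ i j, em i * ep j + ep j * em i = 0 := fun i j => by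
      rw [add_comm]; exact hpm j i
    have h := acomm_sum nc pc em ep
    simp only [h0, smul_zero, Finset.sum_const_zero] at h
    exact eq_neg_of_add_eq_zero_left h
  have hP : (∑ i : Fin 3, pc i • ((1/2 : ℝ) • (ep i + em i)))
      = (1/2 : ℝ) • (Pp + Pm) := by
    rw [hPp, hPm, smul_add, Finset.smul_sum, Finset.smul_sum, ← Finset.sum_add_distrib]
    refine Finset.sum_congr rfl fun i _ => ?_
    module
  have hR : (∑ i : Fin 3, (pc i - 2 * s * nc i) • ((1/2 : ℝ) • (ep i + em i)))
      = (1/2 : ℝ) • (Pp + Pm) - s • (Np + Nm) := by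
    rw [hPp, hPm, hNp, hNm, smul_add, smul_add, Finset.smul_sum, Finset.smul_sum,
      Finset.smul_sum, Finset.smul_sum, ← Finset.sum_add_distrib,
      ← Finset.sum_add_distrib, ← Finset.sum_sub_distrib]
    refine Finset.sum_congr rfl fun i _ => ?_
    module
  rw [hP, hR]
  have rNpNp : ∀ x : A, Np * (Np * x) = x := fun x => by
    rw [← mul_assoc, hNpNp, one_mul]
  have rNmNm : ∀ x : A, Nm * (Nm * x) = -x := fun x => by
    rw [← mul_assoc, hNmNm, neg_one_mul]
  have rNpNm : ∀ x : A, Np * (Nm * x) = -(Nm * (Np * x)) := fun x => by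
    rw [← mul_assoc, hNpNm, neg_mul, mul_assoc]
  have rNpPp : ∀ x : A, Np * (Pp * x) = (2 * s) • x - Pp * (Np * x) := fun x => by
    rw [← mul_assoc, hNpPp, sub_mul, smul_mul_assoc, one_mul, mul_assoc]
  have rNpPm : ∀ x : A, Np * (Pm * x) = -(Pm * (Np * x)) := fun x => by
    rw [← mul_assoc, hNpPm, neg_mul, mul_assoc]
  have rNmPp : ∀ x : A, Nm * (Pp * x) = -(Pp * (Nm * x)) := fun x => by
    rw [← mul_assoc, hNmPp, neg_mul, mul_assoc]
  have rNmPm : ∀ x : A, Nm * (Pm * x) = -((2 * s) • x) - Pm * (Nm * x) := fun x => by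
    rw [← mul_assoc, hNmPm, sub_mul, neg_mul, smul_mul_assoc, one_mul, mul_assoc]
  simp only [mul_add, add_mul, mul_one, one_mul, mul_neg, neg_mul, mul_sub, sub_mul,
    mul_smul_comm, smul_mul_assoc, mul_assoc, rNpNp, rNmNm, rNpNm, rNpPp, rNpPm,
    rNmPp, rNmPm, hNpNp, hNmNm, hNpNm, hNpPp, hNpPm, hNmPp, hNmPm, smul_add,
    smul_sub, smul_neg, smul_smul]
  module
end

section
/- In Cl(3,3), let u, v be orthonormal coefficient vectors (Σ u^i v^i = 0, |u| = |v| = 1) and H = exp(η(u^- v^+ + v^- u^+)/2). Then for p = p_u u + p_v v + p_⊥ (with p_⊥ orthogonal to u and v, all viewed as vectors Σ x^i e_i), one has H p H̃ = (p_u cosh η + p_v sinh η) u + (p_v cosh η + p_u sinh η) v + p_⊥, a hyperbolic rotation by angle η in the plane of u and v. -/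
section CL33Helpers

open Finset

variable {A : Type*} [Ring A] [Algebra ℝ A]

lemma cl33_sum_mul_sum_smul (e f : Fin 3 → A) (a b : Fin 3 → ℝ) :
    (∑ i, a i • e i) * (∑ j, b j • f j) = ∑ i, ∑ j, (a i * b j) • (e i * f j) := by
  rw [Finset.sum_mul_sum]
  exact Finset.sum_congr rfl fun i _ => Finset.sum_congr rfl fun j _ => by
    rw [smul_mul_smul_comm]

lemma cl33_pair_rel (e f : Fin 3 → A) (a b : Fin 3 → ℝ) (t : ℝ)
    (h : ∀ i j, e i * f j + f j * e i = if i = j then t • (1:A) else 0) :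
    (∑ i, a i • e i) * (∑ j, b j • f j) + (∑ j, b j • f j) * (∑ i, a i • e i)
      = ((∑ i, a i * b i) * t) • (1:A) := by
  rw [cl33_sum_mul_sum_smul, cl33_sum_mul_sum_smul,
    show (∑ i : Fin 3, ∑ j : Fin 3, (b i * a j) • (f i * e j))
      = ∑ j : Fin 3, ∑ i : Fin 3, (b i * a j) • (f i * e j) from Finset.sum_comm,
    ← Finset.sum_add_distrib]
  have key : ∀ i : Fin 3, (∑ j, (a i * b j) • (e i * f j)) + (∑ j, (b j * a i) • (f j * e i))
      = (a i * b i * t) • (1:A) := by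
    intro i
    rw [← Finset.sum_add_distrib]
    have : ∀ j : Fin 3, (a i * b j) • (e i * f j) + (b j * a i) • (f j * e i)
        = if i = j then (a i * b i * t) • (1:A) else 0 := by
      intro j
      rw [mul_comm (b j) (a i), ← smul_add, h i j]
      split_ifs with hij
      · subst hij; rw [smul_smul]
      · rw [smul_zero]
    rw [Finset.sum_congr rfl fun j _ => this j, Finset.sum_ite_eq]
    simp
  rw [Finset.sum_congr rfl fun i _ => key i, ← Finset.sum_smul, Finset.sum_mul]

lemma cl33_conj_anticomm (c s : ℝ) (K x : A)
    (hK : K * K = 1) (hx : x * K = -(K * x)) :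
    (c • (1:A) + s • K) * x * (c • (1:A) - s • K)
      = (c^2 + s^2) • x + (2*(c*s)) • (K * x) := by
  have hKxK : K * x * K = -x := by
    rw [mul_assoc, hx, mul_neg, ← mul_assoc, hK, one_mul]
  have expand : (c • (1:A) + s • K) * x * (c • (1:A) - s • K)
      = (c*c) • x - (c*s) • (x*K) + ((s*c) • (K*x) - (s*s) • (K*x*K)) := by
    simp only [add_mul, mul_sub, smul_mul_assoc, mul_smul_comm, one_mul, mul_one, smul_smul]
    module
  rw [expand, hx, hKxK]
  module

lemma cl33_conj_comm (c s : ℝ) (K x : A) (h1 : c^2 - s^2 = 1)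
    (hK : K * K = 1) (hx : x * K = K * x) :
    (c • (1:A) + s • K) * x * (c • (1:A) - s • K) = x := by
  have hKxK : K * x * K = x := by
    rw [mul_assoc, hx, ← mul_assoc, hK, one_mul]
  have expand : (c • (1:A) + s • K) * x * (c • (1:A) - s • K)
      = (c*c) • x - (c*s) • (x*K) + ((s*c) • (K*x) - (s*s) • (K*x*K)) := by
    simp only [add_mul, mul_sub, smul_mul_assoc, mul_smul_comm, one_mul, mul_one, smul_smul]
    module
  rw [expand, hx, hKxK]
  have key : (c*c) • x - (s*s) • x = x := by
    rw [← sub_smul, show c*c - s*s = 1 by nlinarith [h1], one_smul]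
  calc (c*c) • x - (c*s) • (K*x) + ((s*c) • (K*x) - (s*s) • x)
      = ((c*c) • x - (s*s) • x) + ((s*c) • (K*x) - (c*s) • (K*x)) := by abel
    _ = x := by rw [key, mul_comm s c, sub_self, add_zero]

omit [Algebra ℝ A] in
lemma cl33_comm_through (a b x : A) (hxa : x*a = -(a*x)) (hxb : x*b = -(b*x)) :
    x*(a*b) = (a*b)*x := by
  rw [← mul_assoc, hxa, neg_mul, mul_assoc, hxb, mul_neg, neg_neg, ← mul_assoc]

lemma cl33_half_anticomm (x y z : A) (h1 : x*z = -(z*x)) (h2 : y*z = -(z*y)) :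
    ((1/2:ℝ)•(x+y))*z = -(z*((1/2:ℝ)•(x+y))) := by
  rw [smul_mul_assoc, add_mul, h1, h2, mul_smul_comm, mul_add]
  module

lemma cl33_half_sum (e f : Fin 3 → A) (a : Fin 3 → ℝ) :
    ∑ i, a i • ((1/2:ℝ)•(e i + f i)) = (1/2:ℝ)•((∑ i, a i • e i) + (∑ i, a i • f i)) := by
  rw [← Finset.sum_add_distrib, Finset.smul_sum]
  exact Finset.sum_congr rfl fun i _ => by
    rw [smul_smul, mul_comm, ← smul_smul, smul_add]

lemma cl33_two_smul_cancel (x y : A) (h : (2:ℝ)•x = (2:ℝ)•y) : x = y := by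
  calc x = (2:ℝ)⁻¹ • ((2:ℝ)•x) := (inv_smul_smul₀ (by norm_num) x).symm
    _ = (2:ℝ)⁻¹ • ((2:ℝ)•y) := by rw [h]
    _ = y := inv_smul_smul₀ (by norm_num) y

lemma cl33_key (up um vp vm W : A) (c s C S pu pv : ℝ)
    (h1 : c^2 - s^2 = 1) (hC : c^2 + s^2 = C) (hS : 2*(c*s) = S)
    (hup2 : up*up = 1) (hvp2 : vp*vp = 1) (hum2 : um*um = -1) (hvm2 : vm*vm = -1)
    (a1 : um*up = -(up*um)) (a2 : vp*up = -(up*vp)) (a3 : vm*up = -(up*vm))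
    (a4 : vp*um = -(um*vp)) (a5 : vm*um = -(um*vm)) (a6 : vm*vp = -(vp*vm))
    (w1 : W*up = -(up*W)) (w2 : W*um = -(um*W)) (w3 : W*vp = -(vp*W)) (w4 : W*vm = -(vm*W)) :
    ((c • (1:A) + s • (um*vp)) * (c • (1:A) + s • (vm*up))) *
      (pu • ((1/2:ℝ) • (up+um)) + pv • ((1/2:ℝ) • (vp+vm)) + W) *
    ((c • (1:A) - s • (vm*up)) * (c • (1:A) - s • (um*vp))) =
    (pu*C + pv*S) • ((1/2:ℝ) • (up+um)) + (pv*C + pu*S) • ((1/2:ℝ) • (vp+vm)) + W := by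
  have r1 : up*um = -(um*up) := by rw [a1, neg_neg]
  have r2 : up*vp = -(vp*up) := by rw [a2, neg_neg]
  have r3 : up*vm = -(vm*up) := by rw [a3, neg_neg]
  have r5 : um*vm = -(vm*um) := by rw [a5, neg_neg]
  have r6 : vp*vm = -(vm*vp) := by rw [a6, neg_neg]
  -- L = vm*up facts
  have hLL : (vm*up)*(vm*up) = 1 := by
    calc (vm*up)*(vm*up) = vm*((up*vm)*up) := by noncomm_ring
      _ = -((vm*vm)*(up*up)) := by rw [r3]; noncomm_ring
      _ = 1 := by rw [hvm2, hup2, mul_one, neg_neg]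
  have Lup : (vm*up)*up = vm := by rw [mul_assoc, hup2, mul_one]
  have aLup : up*(vm*up) = -((vm*up)*up) := by
    rw [← mul_assoc, r3, neg_mul, mul_assoc, hup2, mul_one]
  have Lvm : (vm*up)*vm = up := by
    calc (vm*up)*vm = vm*(up*vm) := by rw [mul_assoc]
      _ = -((vm*vm)*up) := by rw [r3]; noncomm_ring
      _ = up := by rw [hvm2, neg_one_mul, neg_neg]
  have aLvm : vm*(vm*up) = -((vm*up)*vm) := by
    rw [← mul_assoc, hvm2, neg_one_mul, Lvm]
  have cLum : um*(vm*up) = (vm*up)*um := cl33_comm_through _ _ _ r5 a1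
  have cLvp : vp*(vm*up) = (vm*up)*vp := cl33_comm_through _ _ _ r6 a2
  have cLW : W*(vm*up) = (vm*up)*W := cl33_comm_through _ _ _ w4 w1
  -- K = um*vp facts
  have hKK : (um*vp)*(um*vp) = 1 := by
    calc (um*vp)*(um*vp) = um*((vp*um)*vp) := by noncomm_ring
      _ = -((um*um)*(vp*vp)) := by rw [a4]; noncomm_ring
      _ = 1 := by rw [hum2, hvp2, mul_one, neg_neg]
  have Kvp : (um*vp)*vp = um := by rw [mul_assoc, hvp2, mul_one]
  have aKvp : vp*(um*vp) = -((um*vp)*vp) := by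
    rw [← mul_assoc, a4, neg_mul, mul_assoc, hvp2, mul_one]
  have Kum : (um*vp)*um = vp := by
    calc (um*vp)*um = um*(vp*um) := by rw [mul_assoc]
      _ = -((um*um)*vp) := by rw [a4]; noncomm_ring
      _ = vp := by rw [hum2, neg_one_mul, neg_neg]
  have aKum : um*(um*vp) = -((um*vp)*um) := by
    rw [← mul_assoc, hum2, neg_one_mul, Kum]
  have cKup : up*(um*vp) = (um*vp)*up := cl33_comm_through _ _ _ r1 r2
  have cKvm : vm*(um*vp) = (um*vp)*vm := cl33_comm_through _ _ _ a5 a6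
  have cKW : W*(um*vp) = (um*vp)*W := cl33_comm_through _ _ _ w2 w3
  -- conjugation values
  have e_up : (c • (1:A) + s • (vm*up)) * up * (c • (1:A) - s • (vm*up)) = C • up + S • vm := by
    rw [cl33_conj_anticomm c s _ up hLL aLup, Lup, hC, hS]
  have e_um : (c • (1:A) + s • (vm*up)) * um * (c • (1:A) - s • (vm*up)) = um :=
    cl33_conj_comm c s _ um h1 hLL cLum
  have e_vp : (c • (1:A) + s • (vm*up)) * vp * (c • (1:A) - s • (vm*up)) = vp :=
    cl33_conj_comm c s _ vp h1 hLL cLvp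
  have e_vm : (c • (1:A) + s • (vm*up)) * vm * (c • (1:A) - s • (vm*up)) = C • vm + S • up := by
    rw [cl33_conj_anticomm c s _ vm hLL aLvm, Lvm, hC, hS]
  have e_W : (c • (1:A) + s • (vm*up)) * W * (c • (1:A) - s • (vm*up)) = W :=
    cl33_conj_comm c s _ W h1 hLL cLW
  have f_up : (c • (1:A) + s • (um*vp)) * up * (c • (1:A) - s • (um*vp)) = up :=
    cl33_conj_comm c s _ up h1 hKK cKup
  have f_um : (c • (1:A) + s • (um*vp)) * um * (c • (1:A) - s • (um*vp)) = C • um + S • vp := by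
    rw [cl33_conj_anticomm c s _ um hKK aKum, Kum, hC, hS]
  have f_vp : (c • (1:A) + s • (um*vp)) * vp * (c • (1:A) - s • (um*vp)) = C • vp + S • um := by
    rw [cl33_conj_anticomm c s _ vp hKK aKvp, Kvp, hC, hS]
  have f_vm : (c • (1:A) + s • (um*vp)) * vm * (c • (1:A) - s • (um*vp)) = vm :=
    cl33_conj_comm c s _ vm h1 hKK cKvm
  have f_W : (c • (1:A) + s • (um*vp)) * W * (c • (1:A) - s • (um*vp)) = W :=
    cl33_conj_comm c s _ W h1 hKK cKW
  set B1 := c • (1:A) + s • (um*vp) with hB1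
  set B2 := c • (1:A) + s • (vm*up) with hB2
  set B3 := c • (1:A) - s • (vm*up) with hB3
  set B4 := c • (1:A) - s • (um*vp) with hB4
  have assoc : (B1*B2) * (pu • ((1/2:ℝ) • (up+um)) + pv • ((1/2:ℝ) • (vp+vm)) + W) * (B3*B4)
      = B1 * (B2 * (pu • ((1/2:ℝ) • (up+um)) + pv • ((1/2:ℝ) • (vp+vm)) + W) * B3) * B4 := by
    noncomm_ring
  rw [assoc]
  have inner : B2 * (pu • ((1/2:ℝ) • (up+um)) + pv • ((1/2:ℝ) • (vp+vm)) + W) * B3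
      = pu • ((1/2:ℝ) • ((C • up + S • vm) + um)) + pv • ((1/2:ℝ) • (vp + (C • vm + S • up))) + W := by
    calc B2 * (pu • ((1/2:ℝ) • (up+um)) + pv • ((1/2:ℝ) • (vp+vm)) + W) * B3
        = pu • ((1/2:ℝ) • (B2*up*B3 + B2*um*B3)) + pv • ((1/2:ℝ) • (B2*vp*B3 + B2*vm*B3)) + B2*W*B3 := by
          simp only [mul_add, add_mul, mul_smul_comm, smul_mul_assoc]
      _ = _ := by rw [e_up, e_um, e_vp, e_vm, e_W]
  rw [inner]
  have outer : B1 * (pu • ((1/2:ℝ) • ((C • up + S • vm) + um)) + pv • ((1/2:ℝ) • (vp + (C • vm + S • up))) + W) * B4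
      = pu • ((1/2:ℝ) • ((C • (B1*up*B4) + S • (B1*vm*B4)) + B1*um*B4))
        + pv • ((1/2:ℝ) • (B1*vp*B4 + (C • (B1*vm*B4) + S • (B1*up*B4)))) + B1*W*B4 := by
    simp only [mul_add, add_mul, mul_smul_comm, smul_mul_assoc]
  rw [outer, f_up, f_um, f_vp, f_vm, f_W]
  module

end CL33Helpers

/-- In Cl(3,3), with `u, v` orthonormal and
`H = exp(η(u⁻v⁺ + v⁻u⁺)/2)` (computed via the factorization
`exp(η u⁻v⁺/2) exp(η v⁻u⁺/2)`, using `(u⁻v⁺)² = (v⁻u⁺)² = 1`),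
conjugation `p ↦ H p H̃` is a hyperbolic rotation by `η` in the plane of
`u, v`, fixing the orthogonal component. -/
theorem cl33_hyperbolic_rotation {A : Type*} [Ring A] [Algebra ℝ A]
    (ep em : Fin 3 → A)
    (hpp : ∀ i j, ep i * ep j + ep j * ep i = if i = j then 2 else 0)
    (hmm : ∀ i j, em i * em j + em j * em i = if i = j then -2 else 0)
    (hpm : ∀ i j, ep i * em j + em j * ep i = 0)
    (uc vc wc : Fin 3 → ℝ) (η pu pv : ℝ)
    (horth : ∑ i : Fin 3, uc i * vc i = 0)
    (hu : ∑ i : Fin 3, (uc i) ^ 2 = 1)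
    (hv : ∑ i : Fin 3, (vc i) ^ 2 = 1)
    (hwu : ∑ i : Fin 3, wc i * uc i = 0)
    (hwv : ∑ i : Fin 3, wc i * vc i = 0) :
    ((Real.cosh (η/2) • (1 : A) +
        Real.sinh (η/2) • ((∑ i : Fin 3, uc i • em i) * (∑ i : Fin 3, vc i • ep i))) *
      (Real.cosh (η/2) • (1 : A) +
        Real.sinh (η/2) • ((∑ i : Fin 3, vc i • em i) * (∑ i : Fin 3, uc i • ep i)))) *
    (pu • (∑ i : Fin 3, uc i • ((1/2 : ℝ) • (ep i + em i))) +
      pv • (∑ i : Fin 3, vc i • ((1/2 : ℝ) • (ep i + em i))) +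
      ∑ i : Fin 3, wc i • ((1/2 : ℝ) • (ep i + em i))) *
    ((Real.cosh (η/2) • (1 : A) -
        Real.sinh (η/2) • ((∑ i : Fin 3, vc i • em i) * (∑ i : Fin 3, uc i • ep i))) *
      (Real.cosh (η/2) • (1 : A) -
        Real.sinh (η/2) • ((∑ i : Fin 3, uc i • em i) * (∑ i : Fin 3, vc i • ep i)))) =
    (pu * Real.cosh η + pv * Real.sinh η) •
        (∑ i : Fin 3, uc i • ((1/2 : ℝ) • (ep i + em i))) +
      (pv * Real.cosh η + pu * Real.sinh η) •
        (∑ i : Fin 3, vc i • ((1/2 : ℝ) • (ep i + em i))) +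
      ∑ i : Fin 3, wc i • ((1/2 : ℝ) • (ep i + em i)) := by
  -- converted relation hypotheses
  have hpp' : ∀ i j, ep i * ep j + ep j * ep i = if i = j then (2:ℝ)•(1:A) else 0 := by
    intro i j; rw [hpp i j]; split_ifs <;> norm_num [Algebra.smul_def, map_ofNat]
  have hmm' : ∀ i j, em i * em j + em j * em i = if i = j then (-2:ℝ)•(1:A) else 0 := by
    intro i j; rw [hmm i j]; split_ifs <;> norm_num [Algebra.smul_def, map_ofNat]
  have hpm' : ∀ i j, ep i * em j + em j * ep i = if i = j then (0:ℝ)•(1:A) else 0 := by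
    intro i j; rw [hpm i j]; split_ifs <;> simp
  have hmp' : ∀ i j, em i * ep j + ep j * em i = if i = j then (0:ℝ)•(1:A) else 0 := by
    intro i j; rw [add_comm, hpm j i]; split_ifs <;> simp
  -- dot products
  have s_uu : (∑ i : Fin 3, uc i * uc i) = 1 := by
    rw [← hu]; exact Finset.sum_congr rfl fun i _ => (pow_two _).symm
  have s_vv : (∑ i : Fin 3, vc i * vc i) = 1 := by
    rw [← hv]; exact Finset.sum_congr rfl fun i _ => (pow_two _).symm
  rw [cl33_half_sum ep em uc, cl33_half_sum ep em vc, cl33_half_sum ep em wc]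
  set UP := ∑ i : Fin 3, uc i • ep i with hUP
  set UM := ∑ i : Fin 3, uc i • em i with hUM
  set VP := ∑ i : Fin 3, vc i • ep i with hVP
  set VM := ∑ i : Fin 3, vc i • em i with hVM
  set WP := ∑ i : Fin 3, wc i • ep i with hWP
  set WM := ∑ i : Fin 3, wc i • em i with hWM
  -- squares
  have hup2 : UP*UP = 1 := by
    have h := cl33_pair_rel ep ep uc uc 2 hpp'
    rw [s_uu] at h
    refine cl33_two_smul_cancel _ _ ?_
    rw [two_smul, h]; norm_num
  have hvp2 : VP*VP = 1 := by
    have h := cl33_pair_rel ep ep vc vc 2 hpp'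
    rw [s_vv] at h
    refine cl33_two_smul_cancel _ _ ?_
    rw [two_smul, h]; norm_num
  have hum2 : UM*UM = -1 := by
    have h := cl33_pair_rel em em uc uc (-2) hmm'
    rw [s_uu] at h
    refine cl33_two_smul_cancel _ _ ?_
    rw [two_smul, h, smul_neg, ← neg_smul]; norm_num
  have hvm2 : VM*VM = -1 := by
    have h := cl33_pair_rel em em vc vc (-2) hmm'
    rw [s_vv] at h
    refine cl33_two_smul_cancel _ _ ?_
    rw [two_smul, h, smul_neg, ← neg_smul]; norm_num
  -- anticommutators among u, v
  have a1 : UM*UP = -(UP*UM) := by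
    have h := cl33_pair_rel ep em uc uc 0 hpm'
    exact eq_neg_of_add_eq_zero_right (by simpa using h)
  have a2 : VP*UP = -(UP*VP) := by
    have h := cl33_pair_rel ep ep uc vc 2 hpp'
    rw [horth] at h
    exact eq_neg_of_add_eq_zero_right (by simpa using h)
  have a3 : VM*UP = -(UP*VM) := by
    have h := cl33_pair_rel ep em uc vc 0 hpm'
    exact eq_neg_of_add_eq_zero_right (by simpa using h)
  have a4 : VP*UM = -(UM*VP) := by
    have h := cl33_pair_rel em ep uc vc 0 hmp'
    exact eq_neg_of_add_eq_zero_right (by simpa using h)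
  have a5 : VM*UM = -(UM*VM) := by
    have h := cl33_pair_rel em em uc vc (-2) hmm'
    rw [horth] at h
    exact eq_neg_of_add_eq_zero_right (by simpa using h)
  have a6 : VM*VP = -(VP*VM) := by
    have h := cl33_pair_rel ep em vc vc 0 hpm'
    exact eq_neg_of_add_eq_zero_right (by simpa using h)
  -- anticommutators with w
  have wpu : WP*UP = -(UP*WP) := by
    have h := cl33_pair_rel ep ep wc uc 2 hpp'
    rw [hwu] at h
    exact eq_neg_of_add_eq_zero_left (by simpa using h)
  have wmu : WM*UP = -(UP*WM) := by
    have h := cl33_pair_rel ep em uc wc 0 hpm'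
    exact eq_neg_of_add_eq_zero_right (by simpa using h)
  have wpm : WP*UM = -(UM*WP) := by
    have h := cl33_pair_rel em ep uc wc 0 hmp'
    exact eq_neg_of_add_eq_zero_right (by simpa using h)
  have wmm : WM*UM = -(UM*WM) := by
    have h := cl33_pair_rel em em wc uc (-2) hmm'
    rw [hwu] at h
    exact eq_neg_of_add_eq_zero_left (by simpa using h)
  have wpv : WP*VP = -(VP*WP) := by
    have h := cl33_pair_rel ep ep wc vc 2 hpp'
    rw [hwv] at h
    exact eq_neg_of_add_eq_zero_left (by simpa using h)
  have wmv : WM*VP = -(VP*WM) := by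
    have h := cl33_pair_rel ep em vc wc 0 hpm'
    exact eq_neg_of_add_eq_zero_right (by simpa using h)
  have wpw : WP*VM = -(VM*WP) := by
    have h := cl33_pair_rel em ep vc wc 0 hmp'
    exact eq_neg_of_add_eq_zero_right (by simpa using h)
  have wmw : WM*VM = -(VM*WM) := by
    have h := cl33_pair_rel em em wc vc (-2) hmm'
    rw [hwv] at h
    exact eq_neg_of_add_eq_zero_left (by simpa using h)
  have w1 : ((1/2:ℝ)•(WP+WM))*UP = -(UP*((1/2:ℝ)•(WP+WM))) := cl33_half_anticomm _ _ _ wpu wmu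
  have w2 : ((1/2:ℝ)•(WP+WM))*UM = -(UM*((1/2:ℝ)•(WP+WM))) := cl33_half_anticomm _ _ _ wpm wmm
  have w3 : ((1/2:ℝ)•(WP+WM))*VP = -(VP*((1/2:ℝ)•(WP+WM))) := cl33_half_anticomm _ _ _ wpv wmv
  have w4 : ((1/2:ℝ)•(WP+WM))*VM = -(VM*((1/2:ℝ)•(WP+WM))) := cl33_half_anticomm _ _ _ wpw wmw
  -- scalar identities
  have h1 : Real.cosh (η/2)^2 - Real.sinh (η/2)^2 = 1 := Real.cosh_sq_sub_sinh_sq _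
  have hC : Real.cosh (η/2)^2 + Real.sinh (η/2)^2 = Real.cosh η := by
    have h2 := Real.cosh_two_mul (η/2)
    rw [show 2*(η/2) = η by ring] at h2
    exact h2.symm
  have hS : 2*(Real.cosh (η/2) * Real.sinh (η/2)) = Real.sinh η := by
    have h2 := Real.sinh_two_mul (η/2)
    rw [show 2*(η/2) = η by ring] at h2
    rw [h2]; ring
  exact cl33_key UP UM VP VM ((1/2:ℝ)•(WP+WM)) (Real.cosh (η/2)) (Real.sinh (η/2))
    (Real.cosh η) (Real.sinh η) pu pv h1 hC hS hup2 hvp2 hum2 hvm2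
    a1 a2 a3 a4 a5 a6 w1 w2 w3 w4
end

section
/- In Cl(3,3), let u be a unit coefficient vector and D = exp(t u^- u^+ / 2) = cosh(t/2) + sinh(t/2) u^- u^+. Then for any vector p = p_∥ + p_⊥ with p_∥ = (Σ p^i u^i) u the component along u and p_⊥ orthogonal to u (all as vectors Σ x^i e_i), one has D p D̃ = e^t p_∥ + p_⊥, a non-uniform scaling by e^t in the direction u. -/
lemma cl33_aux_conj {A : Type*} [Ring A] [Algebra ℝ A]
    (c s E a : ℝ) (hcs : c * c - s * s = 1) (hE : (c + s) * (c + s) = E)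
    (B V W : A) (hB : B * B = 1) (hBV : B * V = V) (hVB : V * B = -V)
    (hBW : B * W = W * B) :
    (c • (1 : A) + s • B) * (a • V + W) * (c • (1 : A) + s • (-B)) =
      (E * a) • V + W := by
  have hWBB : W * B * B = W := by rw [mul_assoc, hB, mul_one]
  have hBVB : B * V * B = -V := by rw [hBV, hVB]
  have hBWB : B * W * B = W := by rw [hBW, hWBB]
  simp only [mul_add, add_mul, smul_mul_assoc, mul_smul_comm, one_mul, mul_one,
    smul_smul, mul_neg, neg_mul, smul_neg, neg_neg, hBV, hVB, hBVB, hBWB, hBW, hWBB]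
  match_scalars <;>
    first
      | ring1
      | linear_combination a * hE
      | linear_combination hcs

/-- In Cl(3,3), with `u` a unit coefficient vector and
`D = exp(t u⁻u⁺/2) = cosh(t/2) + sinh(t/2) u⁻u⁺` (reversion
`D̃ = cosh(t/2) + sinh(t/2) u⁺u⁻`), conjugation scales the component of a
vector along `u` by `eᵗ` and fixes the orthogonal component. -/
theorem cl33_nonuniform_scale {A : Type*} [Ring A] [Algebra ℝ A]
    (ep em : Fin 3 → A)
    (hpp : ∀ i j, ep i * ep j + ep j * ep i = if i = j then 2 else 0)
    (hmm : ∀ i j, em i * em j + em j * em i = if i = j then -2 else 0)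
    (hpm : ∀ i j, ep i * em j + em j * ep i = 0)
    (uc wc : Fin 3 → ℝ) (t a : ℝ)
    (hu : ∑ i : Fin 3, (uc i) ^ 2 = 1)
    (hwu : ∑ i : Fin 3, wc i * uc i = 0) :
    (Real.cosh (t/2) • (1 : A) +
        Real.sinh (t/2) • ((∑ i : Fin 3, uc i • em i) * (∑ i : Fin 3, uc i • ep i))) *
      (a • (∑ i : Fin 3, uc i • ((1/2 : ℝ) • (ep i + em i))) +
        ∑ i : Fin 3, wc i • ((1/2 : ℝ) • (ep i + em i))) *
      (Real.cosh (t/2) • (1 : A) +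
        Real.sinh (t/2) • ((∑ i : Fin 3, uc i • ep i) * (∑ i : Fin 3, uc i • em i))) =
    (Real.exp t * a) • (∑ i : Fin 3, uc i • ((1/2 : ℝ) • (ep i + em i))) +
      ∑ i : Fin 3, wc i • ((1/2 : ℝ) • (ep i + em i)) := by
  have key : ∀ (x y : Fin 3 → A) (f g : Fin 3 → ℝ),
      (∑ i : Fin 3, f i • x i) * (∑ j : Fin 3, g j • y j) +
        (∑ j : Fin 3, g j • y j) * (∑ i : Fin 3, f i • x i)
      = ∑ i : Fin 3, ∑ j : Fin 3, (f i * g j) • (x i * y j + y j * x i) := by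
    intro x y f g
    have h1 : (∑ i : Fin 3, f i • x i) * (∑ j : Fin 3, g j • y j)
        = ∑ i : Fin 3, ∑ j : Fin 3, (f i * g j) • (x i * y j) := by
      rw [Finset.sum_mul_sum]
      exact Finset.sum_congr rfl fun i _ => Finset.sum_congr rfl fun j _ =>
        smul_mul_smul_comm (f i) (x i) (g j) (y j)
    have h2 : (∑ j : Fin 3, g j • y j) * (∑ i : Fin 3, f i • x i)
        = ∑ i : Fin 3, ∑ j : Fin 3, (f i * g j) • (y j * x i) := by
      rw [Finset.sum_mul_sum, Finset.sum_comm]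
      exact Finset.sum_congr rfl fun i _ => Finset.sum_congr rfl fun j _ => by
        rw [smul_mul_smul_comm, mul_comm (g j) (f i)]
    rw [h1, h2, ← Finset.sum_add_distrib]
    refine Finset.sum_congr rfl fun i _ => ?_
    rw [← Finset.sum_add_distrib]
    exact Finset.sum_congr rfl fun j _ => (smul_add _ _ _).symm
  have eval : ∀ (f g : Fin 3 → ℝ) (z : A),
      (∑ i : Fin 3, ∑ j : Fin 3, (f i * g j) • (if i = j then z else 0)) =
        (∑ i : Fin 3, f i * g i) • z := by
    intro f g z
    rw [Finset.sum_smul]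
    refine Finset.sum_congr rfl fun i _ => ?_
    simp [smul_ite]
  set Up := ∑ i : Fin 3, uc i • ep i with hUp
  set Um := ∑ i : Fin 3, uc i • em i with hUm
  set Wp := ∑ i : Fin 3, wc i • ep i with hWp
  set Wm := ∑ i : Fin 3, wc i • em i with hWm
  have huu : (∑ i : Fin 3, uc i * uc i) = 1 := by
    simpa [sq] using hu
  have hUpUp : Up * Up = 1 := by
    have h := key ep ep uc uc
    simp only [hpp] at h
    rw [eval, huu, one_smul] at h
    have h2 : (2 : ℝ) • (Up * Up) = (2 : ℝ) • (1 : A) := by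
      rw [two_smul, h, two_smul]
      norm_num
    exact smul_right_injective A two_ne_zero h2
  have hUmUm : Um * Um = -1 := by
    have h := key em em uc uc
    simp only [hmm] at h
    rw [eval, huu, one_smul] at h
    have h2 : (2 : ℝ) • (Um * Um) = (2 : ℝ) • (-1 : A) := by
      rw [two_smul, h, two_smul]
      norm_num
    exact smul_right_injective A two_ne_zero h2
  have hUpUm : Up * Um = -(Um * Up) := by
    have h := key ep em uc uc
    simp only [hpm, smul_zero, Finset.sum_const_zero] at h
    exact eq_neg_of_add_eq_zero_left h
  have hUpWp : Up * Wp = -(Wp * Up) := by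
    have h := key ep ep wc uc
    simp only [hpp] at h
    rw [eval, hwu, zero_smul] at h
    exact eq_neg_of_add_eq_zero_right h
  have hUpWm : Up * Wm = -(Wm * Up) := by
    have h := key em ep wc uc
    simp only [fun i j => (by rw [add_comm]; exact hpm j i : em i * ep j + ep j * em i = 0),
      smul_zero, Finset.sum_const_zero] at h
    exact eq_neg_of_add_eq_zero_right h
  have hUmWp : Um * Wp = -(Wp * Um) := by
    have h := key ep em wc uc
    simp only [hpm, smul_zero, Finset.sum_const_zero] at h
    exact eq_neg_of_add_eq_zero_right h
  have hUmWm : Um * Wm = -(Wm * Um) := by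
    have h := key em em wc uc
    simp only [hmm] at h
    rw [eval, hwu, zero_smul] at h
    exact eq_neg_of_add_eq_zero_right h
  have hBUp : (Um * Up) * Up = Um := by rw [mul_assoc, hUpUp, mul_one]
  have hBUm : (Um * Up) * Um = Up := by
    rw [mul_assoc, hUpUm, mul_neg, ← mul_assoc, hUmUm, neg_mul, neg_neg, one_mul]
  have hUpB : Up * (Um * Up) = -Um := by
    rw [← mul_assoc, hUpUm, neg_mul, mul_assoc, hUpUp, mul_one]
  have hUmB : Um * (Um * Up) = -Up := by
    rw [← mul_assoc, hUmUm, neg_mul, one_mul]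
  have hBB : (Um * Up) * (Um * Up) = 1 := by
    rw [mul_assoc, hUpB, mul_neg, hUmUm, neg_neg]
  have hBWp : (Um * Up) * Wp = Wp * (Um * Up) := by
    rw [mul_assoc, hUpWp, mul_neg, ← mul_assoc, hUmWp, neg_mul, neg_neg, mul_assoc]
  have hBWm : (Um * Up) * Wm = Wm * (Um * Up) := by
    rw [mul_assoc, hUpWm, mul_neg, ← mul_assoc, hUmWm, neg_mul, neg_neg, mul_assoc]
  have hVdef : (∑ i : Fin 3, uc i • ((1/2 : ℝ) • (ep i + em i)))
      = (1/2 : ℝ) • (Up + Um) := by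
    rw [hUp, hUm, ← Finset.sum_add_distrib, Finset.smul_sum]
    refine Finset.sum_congr rfl fun i _ => ?_
    rw [← smul_add, smul_comm]
  have hWdef : (∑ i : Fin 3, wc i • ((1/2 : ℝ) • (ep i + em i)))
      = (1/2 : ℝ) • (Wp + Wm) := by
    rw [hWp, hWm, ← Finset.sum_add_distrib, Finset.smul_sum]
    refine Finset.sum_congr rfl fun i _ => ?_
    rw [← smul_add, smul_comm]
  rw [hVdef, hWdef, hUpUm]
  have hBV : (Um * Up) * ((1/2 : ℝ) • (Up + Um)) = (1/2 : ℝ) • (Up + Um) := by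
    rw [mul_smul_comm, mul_add, hBUp, hBUm, add_comm]
  have hVB : ((1/2 : ℝ) • (Up + Um)) * (Um * Up) = -((1/2 : ℝ) • (Up + Um)) := by
    rw [smul_mul_assoc, add_mul, hUpB, hUmB, ← smul_neg, neg_add, add_comm]
  have hBW : (Um * Up) * ((1/2 : ℝ) • (Wp + Wm)) = ((1/2 : ℝ) • (Wp + Wm)) * (Um * Up) := by
    rw [mul_smul_comm, smul_mul_assoc, mul_add, add_mul, hBWp, hBWm]
  have hcs : Real.cosh (t/2) * Real.cosh (t/2) - Real.sinh (t/2) * Real.sinh (t/2) = 1 := by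
    have := Real.cosh_sq_sub_sinh_sq (t/2)
    nlinarith [this]
  have hE : (Real.cosh (t/2) + Real.sinh (t/2)) * (Real.cosh (t/2) + Real.sinh (t/2))
      = Real.exp t := by
    rw [Real.cosh_add_sinh, ← Real.exp_add]
    norm_num
  exact cl33_aux_conj (Real.cosh (t/2)) (Real.sinh (t/2)) (Real.exp t) a hcs hE
    (Um * Up) ((1/2 : ℝ) • (Up + Um)) ((1/2 : ℝ) • (Wp + Wm)) hBB hBV hVB hBW
end
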